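/- Let (u, v) solve u' = v, v' = -(u+v)³, parametrized so that u is a function of v on a trajectory with v > 0 and u + v > 0, satisfying du/dv = -v/(u+v)³. If at some v₀ > 1 one has u(v₀) > -v₀ + 2v₀^{1/3} and u(v) → -∞ as v → +∞, then a contradiction arises; hence any such trajectory with u(v) → -∞ as v → +∞ satisfies u(v) ≤ -v + 2v^{1/3} for all v > 1. -/

import Mathlib

open Filter

/-- Claim 5: along a trajectory of `u' = v`, `v' = -(u+v)³` parametrized by `v`
(so `du/dv = -v/(u+v)³`) with `u + v > 0` for `v > 0`, if `u(v) → -∞` as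
`v → +∞`, then `u(v) ≤ -v + 2 v^{1/3}` for all `v > 1`. -/
theorem trajectory_upper_bound (u : ℝ → ℝ)
    (hderiv : ∀ v ∈ Set.Ioi (0 : ℝ), HasDerivAt u (-v / (u v + v) ^ 3) v)
    (hpos : ∀ v ∈ Set.Ioi (0 : ℝ), 0 < u v + v)
    (hlim : Tendsto u atTop atBot) :
    ∀ v : ℝ, 1 < v → u v ≤ -v + 2 * v ^ ((1 : ℝ) / 3) := by
  intro v₀ hv₀
  by_contra hcon
  push_neg at hcon
  have hv₀pos : (0:ℝ) < v₀ := lt_trans one_pos hv₀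
  set r : ℝ := v₀ ^ ((1:ℝ)/3) with hrdef
  have hr1 : 1 < r := by
    rw [hrdef]
    exact (Real.one_lt_rpow_iff_of_pos hv₀pos).2 (Or.inl ⟨hv₀, by norm_num⟩)
  have hr0 : (0:ℝ) < r := lt_trans one_pos hr1
  have hr3 : r ^ 3 = v₀ := by
    rw [hrdef, ← Real.rpow_natCast (v₀ ^ ((1:ℝ)/3)) 3, ← Real.rpow_mul hv₀pos.le]
    norm_num
  set a : ℝ := -v₀ + r with hadef
  set c : ℝ := -v₀ + 2*r - (1/(2*r) + r/2) with hcdef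
  clear_value r
  have hca : a < c := by
    have h1 : 1/(2*r) < r/2 := by
      rw [div_lt_div_iff₀ (by linarith) (by norm_num)]
      nlinarith
    rw [hadef, hcdef]; linarith
  have huc : c < u v₀ := by
    have h2 : (0:ℝ) < 1/(2*r) + r/2 := by positivity
    have : c < -v₀ + 2*r := by rw [hcdef]; linarith
    exact lt_trans this hcon
  have hav : ∀ v : ℝ, v₀ ≤ v → 0 < a + v := by
    intro v hv
    have : a + v₀ = r := by rw [hadef]; ring
    linarith
  -- comparison function
  set F : ℝ → ℝ := fun v => -(a+v)⁻¹ + a/2 * ((a+v)^2)⁻¹ with hFdef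
  have hFderiv : ∀ v : ℝ, a + v ≠ 0 → HasDerivAt F (v/(a+v)^3) v := by
    intro v hne
    have h1 : HasDerivAt (fun x : ℝ => a + x) 1 v := (hasDerivAt_id v).const_add a
    have h2 : HasDerivAt (fun x : ℝ => (a+x)⁻¹) (-1/(a+v)^2) v := by
      simpa [Pi.inv_def] using h1.inv hne
    have h3 : HasDerivAt (fun x : ℝ => ((a+x)^2)⁻¹) (-(2*(a+v))/((a+v)^2)^2) v := by
      simpa [Pi.inv_def, Pi.pow_def] using (h1.pow 2).inv (pow_ne_zero 2 hne)
    have h4 : HasDerivAt (fun x : ℝ => -(a+x)⁻¹ + a/2 * ((a+x)^2)⁻¹) _ v := h2.neg.add (h3.const_mul (a/2))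
    convert h4 using 1
    field_simp
    ring
  set G : ℝ → ℝ := fun v => u v + F v with hGdef
  clear_value a c F G
  -- first time u drops to c
  set A : Set ℝ := {v | v₀ ≤ v ∧ u v ≤ c} with hAdef
  obtain ⟨w, hw⟩ := ((hlim.eventually (eventually_le_atBot c)).and (eventually_ge_atTop v₀)).exists
  have hAne : A.Nonempty := ⟨w, hw.2, hw.1⟩
  have hbdd : BddBelow A := ⟨v₀, fun x hx => hx.1⟩
  set T : ℝ := sInf A with hTdef
  have hTv₀ : v₀ ≤ T := le_csInf hAne fun x hx => hx.1
  have hTpos : (0:ℝ) < T := lt_of_lt_of_le hv₀pos hTv₀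
  have huT : u T ≤ c := by
    by_contra h
    push_neg at h
    have hcont : ContinuousAt u T := (hderiv T hTpos).continuousAt
    have hev : ∀ᶠ y in nhds T, u y ∈ Set.Ioi c :=
      hcont.eventually_mem (isOpen_Ioi.mem_nhds h)
    obtain ⟨ε, hε, hball⟩ := Metric.eventually_nhds_iff.1 hev
    obtain ⟨x, hxA, hxlt⟩ := exists_lt_of_csInf_lt hAne (by linarith : sInf A < T + ε)
    have hTx : T ≤ x := csInf_le hbdd hxA
    have hdist : dist x T < ε := by
      rw [Real.dist_eq, abs_of_nonneg (by linarith)]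
      rw [hTdef] at hxlt ⊢
      linarith
    exact absurd hxA.2 (not_le.2 (hball hdist))
  have hmid : ∀ v ∈ Set.Ioo v₀ T, c < u v := by
    intro v hv
    by_contra h
    push_neg at h
    exact absurd (csInf_le hbdd ⟨hv.1.le, h⟩) (not_le.2 hv.2)
  have hGd : ∀ v ∈ Set.Icc v₀ T, HasDerivAt G (-v/(u v + v)^3 + v/(a+v)^3) v := by
    intro v hv
    rw [hGdef]
    exact (hderiv v (Set.mem_Ioi.2 (lt_of_lt_of_le hv₀pos hv.1))).add
      (hFderiv v (hav v hv.1).ne')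
  have hmono : MonotoneOn G (Set.Icc v₀ T) := by
    apply monotoneOn_of_deriv_nonneg (convex_Icc v₀ T)
    · exact fun v hv => (hGd v hv).continuousAt.continuousWithinAt
    · intro v hv
      rw [interior_Icc] at hv
      exact ((hGd v (Set.mem_Icc_of_Ioo hv)).differentiableAt).differentiableWithinAt
    · intro v hv
      rw [interior_Icc] at hv
      rw [(hGd v (Set.mem_Icc_of_Ioo hv)).deriv]
      have hvpos : 0 < v := lt_trans hv₀pos hv.1
      have h1 : 0 < a + v := hav v hv.1.le
      have huv : a + v ≤ u v + v := by
        have := hmid v hv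
        linarith
      have h3 : (a+v)^3 ≤ (u v + v)^3 := pow_le_pow_left₀ h1.le huv 3
      have h2 : v/(u v + v)^3 ≤ v/(a+v)^3 := by
        apply div_le_div_of_nonneg_left hvpos.le (by positivity) h3
      rw [neg_div]
      linarith
  have hG : G v₀ ≤ G T := hmono (Set.left_mem_Icc.2 hTv₀) (Set.right_mem_Icc.2 hTv₀) hTv₀
  have hFv₀ : F v₀ = -(1/(2*r) + r/2) := by
    have h1 : a + v₀ = r := by rw [hadef]; ring
    have h2 : a = r - r^3 := by rw [hadef, ← hr3]; ring
    simp only [hFdef]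
    rw [h1, h2]
    field_simp
    ring
  have hFT : F T < 0 := by
    have h1 : 0 < a + T := hav T hTv₀
    have heq : F T = -(((a+T) + T)/(2*(a+T)^2)) := by
      simp only [hFdef]
      field_simp
      ring
    rw [heq]
    have : 0 < ((a+T)+T)/(2*(a+T)^2) := div_pos (by linarith) (by positivity)
    linarith
  have hG' : u v₀ + F v₀ ≤ u T + F T := by simpa [hGdef] using hG
  rw [hFv₀] at hG'
  have : c < u T := by
    rw [hcdef]
    linarith
  exact absurd huT (not_le.2 this)
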